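/- For every integer p ≥ 2 and all x in (0, π/2), (4/π²)(p - sinh(π/2)/sinh(π/(2p))) < (p - sinh(x)/sinh(x/p))/x² < (1 - p²)/(6p). -/

import Mathlib

open Real Finset

lemma aux_sum_id (p : ℕ) : ∑ k ∈ Finset.range p, (k:ℝ) = p*(p-1)/2 := by
  induction p with
  | zero => simp
  | succ n ih => rw [Finset.sum_range_succ, ih]; push_cast; ring

lemma aux_sum_sq (p : ℕ) : ∑ k ∈ Finset.range p, (k:ℝ)^2 = p*(p-1)*(2*p-1)/6 := by
  induction p with
  | zero => simp
  | succ n ih => rw [Finset.sum_range_succ, ih]; push_cast; ring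

lemma sum_c_sq (p : ℕ) : ∑ k ∈ Finset.range p, ((p:ℝ)-1-2*k)^2 = (p:ℝ)*((p:ℝ)^2-1)/3 := by
  have h : ∀ k ∈ Finset.range p, ((p:ℝ)-1-2*k)^2
      = ((p:ℝ)-1)^2 - (4*((p:ℝ)-1))*(k:ℝ) + 4*(k:ℝ)^2 := by intro k _; ring
  rw [Finset.sum_congr rfl h]
  simp only [Finset.sum_add_distrib, Finset.sum_sub_distrib, ← Finset.mul_sum,
    Finset.sum_const, Finset.card_range, aux_sum_id, aux_sum_sq, nsmul_eq_mul]
  ring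

lemma sinh_identity (p : ℕ) (t : ℝ) :
    sinh ((p:ℝ)*t) = sinh t * ∑ k ∈ Finset.range p, exp (((p:ℝ)-1-2*k)*t) := by
  rw [Finset.mul_sum]
  have h : ∀ k ∈ Finset.range p, sinh t * exp (((p:ℝ)-1-2*k)*t)
      = (fun k : ℕ => exp (((p:ℝ)-2*k)*t)/2) k - (fun k : ℕ => exp (((p:ℝ)-2*k)*t)/2) (k+1) := by
    intro k _
    simp only [sinh_eq]
    rw [sub_div, sub_mul, div_mul_eq_mul_div, div_mul_eq_mul_div, ← exp_add, ← exp_add]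
    push_cast
    ring_nf
  rw [Finset.sum_congr rfl h, Finset.sum_range_sub']
  simp only [sinh_eq]
  push_cast
  ring_nf

lemma exp_sum_eq_cosh_sum (p : ℕ) (t : ℝ) :
    ∑ k ∈ Finset.range p, exp (((p:ℝ)-1-2*k)*t)
      = ∑ k ∈ Finset.range p, cosh ((((p:ℝ)-1-2*k))*t) := by
  have hrefl : ∑ k ∈ Finset.range p, exp (((p:ℝ)-1-2*k)*t)
      = ∑ k ∈ Finset.range p, exp (-((((p:ℝ)-1-2*k))*t)) := by
    rw [← Finset.sum_range_reflect (fun k => exp (((p:ℝ)-1-2*k)*t)) p]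
    apply Finset.sum_congr rfl
    intro k hk
    rw [Finset.mem_range] at hk
    congr 1
    have hk1 : k ≤ p - 1 := Nat.le_sub_one_of_lt hk
    have : ((p - 1 - k : ℕ) : ℝ) = (p:ℝ) - 1 - k := by
      have h1 : (1:ℕ) ≤ p := le_trans (Nat.one_le_iff_ne_zero.2 (by omega)) le_rfl
      push_cast [Nat.cast_sub hk1, Nat.cast_sub h1]
      ring
    rw [this]; ring
  have : (2:ℝ) * ∑ k ∈ Finset.range p, exp (((p:ℝ)-1-2*k)*t)
      = 2 * ∑ k ∈ Finset.range p, cosh ((((p:ℝ)-1-2*k))*t) := by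
    calc (2:ℝ) * ∑ k ∈ Finset.range p, exp (((p:ℝ)-1-2*k)*t)
        = (∑ k ∈ Finset.range p, exp (((p:ℝ)-1-2*k)*t))
          + ∑ k ∈ Finset.range p, exp (-((((p:ℝ)-1-2*k))*t)) := by rw [← hrefl]; ring
      _ = ∑ k ∈ Finset.range p, (exp (((p:ℝ)-1-2*k)*t) + exp (-((((p:ℝ)-1-2*k))*t))) := by
          rw [Finset.sum_add_distrib]
      _ = 2 * ∑ k ∈ Finset.range p, cosh ((((p:ℝ)-1-2*k))*t) := by
          rw [Finset.mul_sum]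
          apply Finset.sum_congr rfl
          intro k _
          rw [cosh_eq]; ring
  linarith

lemma repr_lemma (p : ℕ) (hp : 1 ≤ p) (x : ℝ) (hx : 0 < x) :
    (p:ℝ) - sinh x / sinh (x/p)
      = -∑ k ∈ Finset.range p, (cosh ((((p:ℝ)-1-2*k))*(x/p)) - 1) := by
  have hp0 : (0:ℝ) < p := by exact_mod_cast hp
  have ht : 0 < x / p := div_pos hx hp0
  have hs : sinh (x/p) > 0 := by rw [show sinh (x/p) > 0 ↔ 0 < x/(p:ℝ) from Real.sinh_pos_iff]; exact ht
  have hx' : sinh x = sinh (x/p) * ∑ k ∈ Finset.range p, cosh ((((p:ℝ)-1-2*k))*(x/p)) := by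
    have := sinh_identity p (x/p)
    rw [mul_div_cancel₀ x (ne_of_gt hp0)] at this
    rw [this, exp_sum_eq_cosh_sum]
  rw [hx', mul_comm, mul_div_assoc, div_self (ne_of_gt hs), mul_one,
    Finset.sum_sub_distrib, Finset.sum_const, Finset.card_range, nsmul_eq_mul, mul_one]
  ring

lemma cosh_sub_one_eq (u : ℝ) : cosh u - 1 = 2 * sinh (u/2) ^ 2 := by
  have h := Real.cosh_two_mul (u/2)
  have h2 := Real.cosh_sq (u/2)
  rw [show 2 * (u/2) = u by ring] at h
  rw [h, h2]; ring

lemma sq_le_sinh_sq (u : ℝ) : u^2 ≤ sinh u ^ 2 := by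
  rcases le_or_gt 0 u with h | h
  · rcases eq_or_lt_of_le h with rfl | h
    · simp
    · have := Real.self_lt_sinh_iff.2 h
      nlinarith
  · have h1 : 0 < -u := by linarith
    have := Real.self_lt_sinh_iff.2 h1
    rw [Real.sinh_neg] at this
    nlinarith

lemma sq_lt_sinh_sq (u : ℝ) (hu : u ≠ 0) : u^2 < sinh u ^ 2 := by
  rcases lt_or_gt_of_ne hu with h | h
  · have h1 : 0 < -u := by linarith
    have := Real.self_lt_sinh_iff.2 h1
    rw [Real.sinh_neg] at this
    nlinarith
  · have := Real.self_lt_sinh_iff.2 h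
    nlinarith

lemma sinh_lt_mul_cosh (u : ℝ) (hu : 0 < u) : sinh u < u * cosh u := by
  have hmono : StrictMonoOn (fun t : ℝ => t * cosh t - sinh t) (Set.Ici 0) := by
    apply strictMonoOn_of_deriv_pos (convex_Ici 0)
    · exact ((continuous_id.mul Real.continuous_cosh).sub Real.continuous_sinh).continuousOn
    · intro t ht
      rw [interior_Ici] at ht
      have hd : HasDerivAt (fun t : ℝ => t * cosh t - sinh t) (t * sinh t) t := by
        have := ((hasDerivAt_id t).mul (Real.hasDerivAt_cosh t)).sub (Real.hasDerivAt_sinh t)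
        exact this.congr_deriv (by simp)
      rw [hd.deriv]
      exact mul_pos ht (Real.sinh_pos_iff.2 ht)
  have := hmono (Set.self_mem_Ici) (Set.mem_Ici.2 (le_of_lt hu)) hu
  simp at this
  linarith

lemma sinh_div_mono (u v : ℝ) (hu : 0 < u) (huv : u < v) : sinh u / u < sinh v / v := by
  have hmono : StrictMonoOn (fun t : ℝ => sinh t / t) (Set.Ioi 0) := by
    apply strictMonoOn_of_deriv_pos (convex_Ioi 0)
    · exact Real.continuous_sinh.continuousOn.div continuousOn_id
        (fun t ht => ne_of_gt (Set.mem_Ioi.1 ht))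
    · intro t ht
      rw [interior_Ioi] at ht
      have ht0 : (0:ℝ) < t := ht
      have hd : HasDerivAt (fun t : ℝ => sinh t / t) ((cosh t * t - sinh t * 1)/t^2) t :=
        (Real.hasDerivAt_sinh t).div (hasDerivAt_id t) (ne_of_gt ht0)
      rw [hd.deriv]
      have := sinh_lt_mul_cosh t ht0
      apply div_pos (by nlinarith) (by positivity)
  exact hmono (Set.mem_Ioi.2 hu) (Set.mem_Ioi.2 (lt_trans hu huv)) huv

lemma half_sq_le_cosh_sub_one (u : ℝ) : u^2/2 ≤ cosh u - 1 := by
  rw [cosh_sub_one_eq]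
  have := sq_le_sinh_sq (u/2)
  nlinarith

lemma half_sq_lt_cosh_sub_one (u : ℝ) (hu : u ≠ 0) : u^2/2 < cosh u - 1 := by
  rw [cosh_sub_one_eq]
  have := sq_lt_sinh_sq (u/2) (by simpa using hu)
  nlinarith

lemma term_strict (d x y : ℝ) (hd : 0 < d) (hx : 0 < x) (hxy : x < y) :
    (cosh (d*x) - 1)/x^2 < (cosh (d*y) - 1)/y^2 := by
  have hy : 0 < y := lt_trans hx hxy
  have hA : 0 < sinh (d*x/2) := Real.sinh_pos_iff.2 (by positivity)
  have hB : 0 < sinh (d*y/2) := Real.sinh_pos_iff.2 (by positivity)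
  have hm := sinh_div_mono (d*x/2) (d*y/2) (by positivity) (by nlinarith)
  rw [div_lt_div_iff₀ (by positivity) (by positivity)] at hm
  have key : sinh (d*x/2) * y < sinh (d*y/2) * x := by nlinarith
  rw [cosh_sub_one_eq, cosh_sub_one_eq, div_lt_div_iff₀ (by positivity) (by positivity)]
  have hh := mul_lt_mul'' key key (by positivity) (by positivity)
  nlinarith

lemma term_le (d x y : ℝ) (hx : 0 < x) (hxy : x < y) :
    (cosh (d*x) - 1)/x^2 ≤ (cosh (d*y) - 1)/y^2 := by
  rcases lt_trichotomy d 0 with h | rfl | h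
  · have := term_strict (-d) x y (by linarith) hx hxy
    rw [show -d*x = -(d*x) by ring, show -d*y = -(d*y) by ring, cosh_neg, cosh_neg] at this
    linarith
  · simp
  · exact le_of_lt (term_strict d x y h hx hxy)

theorem stmt_14 (p : ℕ) (hp : 2 ≤ p) (x : ℝ) (hx0 : 0 < x) (hx1 : x < π / 2) :
    4 / π ^ 2 * ((p : ℝ) - sinh (π / 2) / sinh (π / (2 * p))) <
        ((p : ℝ) - sinh x / sinh (x / p)) / x ^ 2 ∧
      ((p : ℝ) - sinh x / sinh (x / p)) / x ^ 2 < (1 - (p : ℝ) ^ 2) / (6 * p) := by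
  have hp0 : (0:ℝ) < p := by exact_mod_cast Nat.lt_of_lt_of_le two_pos hp
  have hp1 : 1 ≤ p := le_trans one_le_two hp
  have hπ : (0:ℝ) < π := pi_pos
  have hπ2 : (0:ℝ) < π/2 := by positivity
  set F : ℝ → ℝ := fun y => ∑ k ∈ Finset.range p,
    (cosh ((((p:ℝ)-1-2*k)/p) * y) - 1) with hF
  have hrepr : ∀ y : ℝ, 0 < y → (p:ℝ) - sinh y / sinh (y/p) = -F y := by
    intro y hy
    rw [repr_lemma p hp1 y hy, hF]
    have harg : ∀ k : ℕ, (((p:ℝ)-1-2*k)/p) * y = ((p:ℝ)-1-2*k) * (y/p) := by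
      intro k; ring
    simp only [harg]
  have hd0 : 0 < ((p:ℝ)-1-2*(0:ℕ))/p := by
    have : (2:ℝ) ≤ p := by exact_mod_cast hp
    push_cast
    apply div_pos (by linarith) hp0
  -- RIGHT inequality
  have hlow : x^2 * ((p:ℝ)^2-1)/(6*p) < F x := by
    have hsum : ∑ k ∈ Finset.range p, ((((p:ℝ)-1-2*k)/p) * x)^2/2 < F x := by
      apply Finset.sum_lt_sum
      · intro k _
        exact half_sq_le_cosh_sub_one _
      · refine ⟨0, Finset.mem_range.2 (by omega), ?_⟩
        apply half_sq_lt_cosh_sub_one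
        exact ne_of_gt (mul_pos hd0 hx0)
    have hcalc : ∑ k ∈ Finset.range p, ((((p:ℝ)-1-2*k)/p) * x)^2/2
        = x^2 * ((p:ℝ)^2-1)/(6*p) := by
      have : ∀ k ∈ Finset.range p, ((((p:ℝ)-1-2*k)/p) * x)^2/2
          = (((p:ℝ)-1-2*k))^2 * (x^2/(2*(p:ℝ)^2)) := by
        intro k _
        field_simp
      rw [Finset.sum_congr rfl this, ← Finset.sum_mul, sum_c_sq]
      field_simp
      ring
    linarith [hcalc ▸ hsum]
  -- LEFT : F x / x^2 < F (π/2) / (π/2)^2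
  have hmono : F x / x^2 < F (π/2) / (π/2)^2 := by
    rw [hF]
    simp only [Finset.sum_div]
    apply Finset.sum_lt_sum
    · intro k _
      exact term_le _ x (π/2) hx0 hx1
    · exact ⟨0, Finset.mem_range.2 (by omega), term_strict _ x (π/2) hd0 hx0 hx1⟩
  constructor
  · rw [show π / (2*(p:ℝ)) = (π/2)/(p:ℝ) by ring]
    rw [hrepr x hx0, hrepr (π/2) hπ2]
    · have heq : F (π/2) / (π/2)^2 = 4/π^2 * F (π/2) := by
        field_simp
        ring
      rw [heq] at hmono
      have hx2 : (0:ℝ) < x^2 := by positivity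
      calc 4/π^2 * (-F (π/2)) = -(4/π^2 * F (π/2)) := by ring
        _ < -(F x / x^2) := by linarith
        _ = -F x / x^2 := by ring
  · rw [hrepr x hx0]
    rw [div_lt_div_iff₀ (by positivity) (by positivity)]
    rw [div_lt_iff₀ (by positivity : (0:ℝ) < 6*(p:ℝ))] at hlow
    linarith
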